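/- For every integer m >= 4, sum_{n=1}^infty h_n^(3)/n^m = (1/2)*zeta_H(m-2) + (3/2)*zeta_H(m-1) + zeta_H(m) - (5/4)*zeta(m-1) - (3/4)*zeta(m-2), where zeta_H(s) = sum_{n=1}^infty H_n/n^s. -/

import Mathlib

open scoped BigOperators

noncomputable def H (n : ℕ) : ℝ := ∑ k ∈ Finset.range n, (1 : ℝ) / (k + 1)

noncomputable def h : ℕ → ℕ → ℝ
  | 0, n => 1 / n
  | r + 1, n => ∑ k ∈ Finset.range n, h r (k + 1)

lemma H_succ (n : ℕ) : H (n + 1) = H n + 1 / ((n : ℝ) + 1) := by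
  simp [H, Finset.sum_range_succ]

lemma h1_eq (n : ℕ) : h 1 n = H n := by
  simp [h, H]

lemma h2_eq (n : ℕ) : h 2 n = ((n : ℝ) + 1) * (H (n + 1) - 1) := by
  induction n with
  | zero => simp [h, H]
  | succ n ih =>
    show (∑ k ∈ Finset.range (n+1), h 1 (k+1)) = _
    rw [Finset.sum_range_succ]
    have : (∑ k ∈ Finset.range n, h 1 (k+1)) = h 2 n := rfl
    rw [this, ih, h1_eq, H_succ (n+1)]
    push_cast
    have : ((n:ℝ) + 1 + 1) ≠ 0 := by positivity
    field_simp
    ring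

lemma h3_eq (n : ℕ) : h 3 n = ((n : ℝ) + 1) * ((n : ℝ) + 2) / 2 * (H (n + 2) - 3/2) := by
  induction n with
  | zero => simp [h, H, Finset.sum_range_succ]; norm_num
  | succ n ih =>
    show (∑ k ∈ Finset.range (n+1), h 2 (k+1)) = _
    rw [Finset.sum_range_succ]
    have : (∑ k ∈ Finset.range n, h 2 (k+1)) = h 3 n := rfl
    rw [this, ih, h2_eq, show n+1+2 = (n+2)+1 from rfl, H_succ (n+2), show (n:ℕ)+1+1 = n+2 from rfl]
    push_cast
    have : ((n:ℝ) + 2 + 1) ≠ 0 := by positivity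
    field_simp
    ring

lemma H_le_sqrt (n : ℕ) : H n ≤ 2 * Real.sqrt n := by
  induction n with
  | zero => simp [H]
  | succ n ih =>
    rw [H_succ]
    have h1 : Real.sqrt n ≤ Real.sqrt (n+1) := by
      apply Real.sqrt_le_sqrt; push_cast; linarith
    have h2 : (0:ℝ) < Real.sqrt ((n:ℝ)+1) := Real.sqrt_pos.2 (by positivity)
    have h3 : Real.sqrt ((n:ℝ)+1) ^ 2 = (n:ℝ)+1 := Real.sq_sqrt (by positivity)
    have key : 1 / ((n:ℝ) + 1) ≤ 2 * Real.sqrt ((n:ℝ)+1) - 2 * Real.sqrt n := by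
      have h4 : Real.sqrt (n:ℝ) ^ 2 = (n:ℝ) := Real.sq_sqrt (by positivity)
      have h5 : Real.sqrt (n:ℝ) ≤ Real.sqrt ((n:ℝ)+1) := h1
      have h6 : (0:ℝ) ≤ Real.sqrt (n:ℝ) := Real.sqrt_nonneg _
      rw [div_le_iff₀ (by positivity)]
      nlinarith [sq_nonneg (Real.sqrt ((n:ℝ)+1) - Real.sqrt (n:ℝ))]
    push_cast
    push_cast at ih
    linarith

lemma H_nonneg (n : ℕ) : 0 ≤ H n := by
  apply Finset.sum_nonneg; intro k _; positivity

lemma summable_zeta (k : ℕ) (hk : 2 ≤ k) : Summable (fun n : ℕ => 1 / ((n : ℝ) + 1) ^ k) := by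
  have base : Summable (fun n : ℕ => 1 / (n : ℝ) ^ k) := by
    apply Real.summable_one_div_nat_pow.2; omega
  have := (summable_nat_add_iff 1).2 base
  convert this using 2 with n
  case e'_3 => rfl
  push_cast
  ring_nf

lemma summable_rpow32 : Summable (fun n : ℕ => 2 / ((n : ℝ) + 1) ^ ((3:ℝ)/2)) := by
  have base : Summable (fun n : ℕ => 1 / (n : ℝ) ^ ((3:ℝ)/2)) :=
    Real.summable_one_div_nat_rpow.2 (by norm_num)
  have := ((summable_nat_add_iff 1).2 base).mul_left 2
  convert this using 2 with n
  case e'_3 => rfl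
  push_cast
  ring_nf

lemma summable_zetaH (k : ℕ) (hk : 2 ≤ k) :
    Summable (fun n : ℕ => H (n + 1) / ((n : ℝ) + 1) ^ k) := by
  apply Summable.of_nonneg_of_le (fun n => div_nonneg (H_nonneg _) (by positivity)) _
    summable_rpow32
  intro n
  set x : ℝ := (n:ℝ) + 1 with hxdef
  have hx : (1:ℝ) ≤ x := by simp [hxdef]
  have hx0 : (0:ℝ) < x := by linarith
  have hH : H (n+1) ≤ 2 * Real.sqrt x := by
    have := H_le_sqrt (n+1)
    simpa [hxdef] using this
  have hpow : x ^ 2 ≤ x ^ k := pow_le_pow_right₀ hx hk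
  have key : x ^ ((3:ℝ)/2) * Real.sqrt x = x ^ 2 := by
    rw [Real.sqrt_eq_rpow, ← Real.rpow_add hx0, ← Real.rpow_natCast x 2]
    norm_num
  have step2 : 2 * Real.sqrt x / x ^ 2 = 2 / x ^ ((3:ℝ)/2) := by
    rw [div_eq_div_iff (by positivity) (by positivity), mul_assoc,
      mul_comm (Real.sqrt x), key]
  calc H (n+1) / x ^ k ≤ (2 * Real.sqrt x) / x ^ k := by gcongr
    _ ≤ (2 * Real.sqrt x) / x ^ 2 := by gcongr
    _ = 2 / x ^ ((3:ℝ)/2) := step2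

noncomputable def zeta (m : ℕ) : ℝ := ∑' n : ℕ, (1 : ℝ) / ((n : ℝ) + 1) ^ m

noncomputable def hzeta (m k : ℕ) : ℝ := ∑' j : ℕ, (1 : ℝ) / ((j : ℝ) + k) ^ m

noncomputable def zetaH (m : ℕ) : ℝ := ∑' n : ℕ, H (n + 1) / ((n : ℝ) + 1) ^ m

def stirling1 : ℕ → ℕ → ℕ
  | 0, 0 => 1
  | 0, _ + 1 => 0
  | _ + 1, 0 => 0
  | n + 1, k + 1 => stirling1 n k + n * stirling1 n (k + 1)

theorem stmt14 (m : ℕ) (hm : 4 ≤ m) :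
    ∑' n : ℕ, h 3 (n + 1) / ((n : ℝ) + 1) ^ m =
      (1 / 2) * zetaH (m - 2) + (3 / 2) * zetaH (m - 1) + zetaH m -
        (5 / 4) * zeta (m - 1) - (3 / 4) * zeta (m - 2) := by
  obtain ⟨k, hk2, rfl⟩ : ∃ k, 2 ≤ k ∧ m = k + 2 := ⟨m - 2, by omega, by omega⟩
  rw [show k + 2 - 2 = k from by omega, show k + 2 - 1 = k + 1 from by omega]
  have key : ∀ n : ℕ, h 3 (n + 1) / ((n : ℝ) + 1) ^ (k + 2) =
      (1/2) * (H (n+1) / ((n:ℝ)+1)^k) + (3/2) * (H (n+1) / ((n:ℝ)+1)^(k+1))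
        + H (n+1) / ((n:ℝ)+1)^(k+2)
        - (5/4) * (1 / ((n:ℝ)+1)^(k+1)) - (3/4) * (1 / ((n:ℝ)+1)^k) := by
    intro n
    rw [h3_eq]
    have hs : H (n+1+2) = H (n+1) + 1/((n:ℝ)+2) + 1/((n:ℝ)+3) := by
      rw [show n+1+2 = (n+2)+1 from rfl, H_succ, show n+2 = (n+1)+1 from rfl, H_succ (n+1)]
      push_cast; ring
    rw [hs]
    push_cast
    have hx : ((n:ℝ)+1) ≠ 0 := by positivity
    have hx2 : ((n:ℝ)+2) ≠ 0 := by positivity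
    have hx3 : ((n:ℝ)+3) ≠ 0 := by positivity
    have hp : ((n:ℝ)+1)^k ≠ 0 := pow_ne_zero _ hx
    field_simp
    ring
  have hA : Summable (fun n : ℕ => (1/2:ℝ) * (H (n+1)/((n:ℝ)+1)^k)) :=
    (summable_zetaH k hk2).mul_left _
  have hB : Summable (fun n : ℕ => (3/2:ℝ) * (H (n+1)/((n:ℝ)+1)^(k+1))) :=
    (summable_zetaH (k+1) (by omega)).mul_left _
  have hC : Summable (fun n : ℕ => H (n+1)/((n:ℝ)+1)^(k+2)) :=
    summable_zetaH (k+2) (by omega)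
  have hD : Summable (fun n : ℕ => (5/4:ℝ) * (1/((n:ℝ)+1)^(k+1))) :=
    (summable_zeta (k+1) (by omega)).mul_left _
  have hE : Summable (fun n : ℕ => (3/4:ℝ) * (1/((n:ℝ)+1)^k)) :=
    (summable_zeta k hk2).mul_left _
  rw [tsum_congr key, Summable.tsum_sub (((hA.add hB).add hC).sub hD) hE,
    Summable.tsum_sub ((hA.add hB).add hC) hD, Summable.tsum_add (hA.add hB) hC, Summable.tsum_add hA hB,
    tsum_mul_left, tsum_mul_left, tsum_mul_left, tsum_mul_left]
  simp only [zetaH, zeta]
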